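/- Let g : ℝ³ → ℝ be defined by g(a,b,c) = max{ (4/3)(1 + 2ab + 2ac + 2bc), (4/3)(1 + 2ab − 2ac − 2bc), (4/3)(1 − 2ab − 2ac + 2bc), (4/3)(1 − 2ab + 2ac − 2bc) }. Then (3/4)·(1/(4π))·∫₀^{2π} ∫₀^{π} g(cos θ sin φ, sin θ sin φ, cos φ) · sin φ dφ dθ = 1 + 4/π. (This is the mean square width of a cube with unit edge length.) -/
import Mathlib


open Real

/-- Squared-width function of the cube with vertices `(±√3/3, ±√3/3, ±√3/3)` in direction
`(a,b,c)` on the unit sphere. -/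
noncomputable def gCube (a b c : ℝ) : ℝ :=
  max (max ((4/3) * (1 + 2 * a * b + 2 * a * c + 2 * b * c))
        ((4/3) * (1 + 2 * a * b - 2 * a * c - 2 * b * c)))
    (max ((4/3) * (1 - 2 * a * b - 2 * a * c + 2 * b * c))
      ((4/3) * (1 - 2 * a * b + 2 * a * c - 2 * b * c)))

lemma gCube_eq (a b c : ℝ) :
    gCube a b c = 4/3 * (1 + 2 * |a*b| + 2 * |a*c| + 2 * |b*c|) := by
  have hab := le_abs_self (a*b); have hab' := neg_abs_le (a*b)
  have hac := le_abs_self (a*c); have hac' := neg_abs_le (a*c)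
  have hbc := le_abs_self (b*c); have hbc' := neg_abs_le (b*c)
  unfold gCube
  apply le_antisymm
  · apply max_le <;> apply max_le <;> nlinarith
  · rcases le_total 0 a with ha | ha <;> rcases le_total 0 b with hb | hb <;>
      rcases le_total 0 c with hc | hc <;>
      rw [abs_mul, abs_mul, abs_mul] <;>
      [ rw [abs_of_nonneg ha, abs_of_nonneg hb, abs_of_nonneg hc];
        rw [abs_of_nonneg ha, abs_of_nonneg hb, abs_of_nonpos hc];
        rw [abs_of_nonneg ha, abs_of_nonpos hb, abs_of_nonneg hc];
        rw [abs_of_nonneg ha, abs_of_nonpos hb, abs_of_nonpos hc];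
        rw [abs_of_nonpos ha, abs_of_nonneg hb, abs_of_nonneg hc];
        rw [abs_of_nonpos ha, abs_of_nonneg hb, abs_of_nonpos hc];
        rw [abs_of_nonpos ha, abs_of_nonpos hb, abs_of_nonneg hc];
        rw [abs_of_nonpos ha, abs_of_nonpos hb, abs_of_nonpos hc]]
    · exact le_max_of_le_left (le_max_of_le_left (le_of_eq (by ring)))
    · exact le_max_of_le_left (le_max_of_le_right (le_of_eq (by ring)))
    · exact le_max_of_le_right (le_max_of_le_right (le_of_eq (by ring)))
    · exact le_max_of_le_right (le_max_of_le_left (le_of_eq (by ring)))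
    · exact le_max_of_le_right (le_max_of_le_left (le_of_eq (by ring)))
    · exact le_max_of_le_right (le_max_of_le_right (le_of_eq (by ring)))
    · exact le_max_of_le_left (le_max_of_le_right (le_of_eq (by ring)))
    · exact le_max_of_le_left (le_max_of_le_left (le_of_eq (by ring)))

lemma integral_sin_sq_abs_cos : ∫ φ in (0:ℝ)..π, sin φ ^ 2 * |cos φ| = 2/3 := by
  have hi1 : IntervalIntegrable (fun φ : ℝ => sin φ ^ 2 * |cos φ|) MeasureTheory.volume 0 (π/2) :=
    (((continuous_sin.pow 2).mul continuous_cos.abs)).intervalIntegrable _ _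
  have hi2 : IntervalIntegrable (fun φ : ℝ => sin φ ^ 2 * |cos φ|) MeasureTheory.volume (π/2) π :=
    (((continuous_sin.pow 2).mul continuous_cos.abs)).intervalIntegrable _ _
  rw [← intervalIntegral.integral_add_adjacent_intervals hi1 hi2]
  have h1 : ∫ φ in (0:ℝ)..(π/2), sin φ ^ 2 * |cos φ| = 1/3 := by
    rw [intervalIntegral.integral_congr (g := fun φ => sin φ ^ 2 * cos φ) ?_]
    · rw [integral_sin_sq_mul_cos]; simp
    · intro φ hφ
      rw [Set.uIcc_of_le (by positivity)] at hφ
      have : 0 ≤ cos φ := cos_nonneg_of_mem_Icc ⟨by linarith [hφ.1, pi_pos.le], hφ.2⟩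
      simp [abs_of_nonneg this]
  have h2 : ∫ φ in (π/2:ℝ)..π, sin φ ^ 2 * |cos φ| = 1/3 := by
    rw [intervalIntegral.integral_congr (g := fun φ => -(sin φ ^ 2 * cos φ)) ?_]
    · rw [intervalIntegral.integral_neg, integral_sin_sq_mul_cos]; norm_num
    · intro φ hφ
      rw [Set.uIcc_of_le (by linarith [pi_pos])] at hφ
      have : cos φ ≤ 0 := cos_nonpos_of_pi_div_two_le_of_le hφ.1 (by linarith [hφ.2, pi_pos])
      simp [abs_of_nonpos this]
  rw [h1, h2]; norm_num

lemma inner_integral (θ : ℝ) :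
    (∫ φ in (0:ℝ)..π,
        gCube (Real.cos θ * Real.sin φ) (Real.sin θ * Real.sin φ) (Real.cos φ) * Real.sin φ)
      = 8/3 + 32/9 * |Real.cos θ * Real.sin θ| + 16/9 * (|Real.cos θ| + |Real.sin θ|) := by
  rw [intervalIntegral.integral_congr
      (g := fun φ => 4/3 * sin φ + (8/3 * |Real.cos θ * Real.sin θ|) * sin φ ^ 3
        + (8/3 * (|Real.cos θ| + |Real.sin θ|)) * (sin φ ^ 2 * |cos φ|)) ?_]
  · have hi1 : IntervalIntegrable (fun φ : ℝ => 4/3 * sin φ) MeasureTheory.volume 0 π :=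
      (continuous_const.mul continuous_sin).intervalIntegrable _ _
    have hi2 : IntervalIntegrable
        (fun φ : ℝ => (8/3 * |Real.cos θ * Real.sin θ|) * sin φ ^ 3) MeasureTheory.volume 0 π :=
      (continuous_const.mul (continuous_sin.pow 3)).intervalIntegrable _ _
    have hi3 : IntervalIntegrable
        (fun φ : ℝ => (8/3 * (|Real.cos θ| + |Real.sin θ|)) * (sin φ ^ 2 * |cos φ|))
        MeasureTheory.volume 0 π :=
      (continuous_const.mul ((continuous_sin.pow 2).mul continuous_cos.abs)).intervalIntegrable _ _
    rw [intervalIntegral.integral_add (hi1.add hi2) hi3, intervalIntegral.integral_add hi1 hi2,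
      intervalIntegral.integral_const_mul, intervalIntegral.integral_const_mul,
      intervalIntegral.integral_const_mul, integral_sin, integral_sin_pow_three,
      integral_sin_sq_abs_cos]
    simp only [Real.cos_zero, Real.cos_pi]
    ring
  · intro φ hφ
    rw [Set.uIcc_of_le pi_pos.le] at hφ
    have hs : |sin φ| = sin φ := abs_of_nonneg (sin_nonneg_of_nonneg_of_le_pi hφ.1 hφ.2)
    have e1 : |Real.cos θ * Real.sin φ * (Real.sin θ * Real.sin φ)|
        = |Real.cos θ * Real.sin θ| * Real.sin φ ^ 2 := by
      rw [show Real.cos θ * Real.sin φ * (Real.sin θ * Real.sin φ)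
          = (Real.cos θ * Real.sin θ) * (Real.sin φ * Real.sin φ) by ring,
        abs_mul, abs_mul (Real.sin φ), hs]
      ring
    have e2 : |Real.cos θ * Real.sin φ * Real.cos φ|
        = |Real.cos θ| * (Real.sin φ * |Real.cos φ|) := by
      rw [abs_mul, abs_mul, hs, mul_assoc]
    have e3 : |Real.sin θ * Real.sin φ * Real.cos φ|
        = |Real.sin θ| * (Real.sin φ * |Real.cos φ|) := by
      rw [abs_mul, abs_mul, hs, mul_assoc]
    simp only [gCube_eq]
    rw [e1, e2, e3]
    ring

lemma integral_abs_cos_mul_sin : ∫ θ in (0:ℝ)..(2*π), |Real.cos θ * Real.sin θ| = 2 := by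
  have hc : Continuous fun θ : ℝ => |Real.cos θ * Real.sin θ| :=
    (continuous_cos.mul continuous_sin).abs
  have key : ∀ a b : ℝ, (∀ θ ∈ Set.uIcc a b, |Real.cos θ * Real.sin θ| = Real.sin θ * Real.cos θ)
      → ∫ θ in a..b, |Real.cos θ * Real.sin θ| = (sin b ^ 2 - sin a ^ 2) / 2 := by
    intro a b h
    rw [intervalIntegral.integral_congr (g := fun θ => Real.sin θ * Real.cos θ) h,
      integral_sin_mul_cos₁]
  have key' : ∀ a b : ℝ,
      (∀ θ ∈ Set.uIcc a b, |Real.cos θ * Real.sin θ| = -(Real.sin θ * Real.cos θ))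
      → ∫ θ in a..b, |Real.cos θ * Real.sin θ| = -((sin b ^ 2 - sin a ^ 2) / 2) := by
    intro a b h
    rw [intervalIntegral.integral_congr (g := fun θ => -(Real.sin θ * Real.cos θ)) h,
      intervalIntegral.integral_neg, integral_sin_mul_cos₁]
  have hpi := pi_pos
  have hsle : ∀ θ : ℝ, π ≤ θ → θ ≤ 2*π → Real.sin θ ≤ 0 := by
    intro θ h1 h2
    have := sin_nonneg_of_nonneg_of_le_pi (x := θ - π) (by linarith) (by linarith)
    rw [Real.sin_sub_pi] at this; linarith
  have hi : ∀ a b : ℝ, IntervalIntegrable (fun θ : ℝ => |Real.cos θ * Real.sin θ|)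
      MeasureTheory.volume a b := fun a b => hc.intervalIntegrable a b
  rw [← intervalIntegral.integral_add_adjacent_intervals (b := π) (hi 0 π) (hi π (2*π)),
    ← intervalIntegral.integral_add_adjacent_intervals (b := π/2) (hi 0 (π/2)) (hi (π/2) π),
    ← intervalIntegral.integral_add_adjacent_intervals (b := 3*π/2) (hi π (3*π/2))
      (hi (3*π/2) (2*π))]
  have h32 : Real.sin (3*π/2) = -1 := by
    rw [show (3*π/2 : ℝ) = π + π/2 by ring, Real.sin_add]; simp
  rw [key 0 (π/2) ?_, key' (π/2) π ?_, key π (3*π/2) ?_, key' (3*π/2) (2*π) ?_]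
  · rw [h32]; simp; norm_num
  · intro θ hθ
    rw [Set.uIcc_of_le (by linarith)] at hθ
    have h1 : Real.sin θ ≤ 0 := hsle θ (by linarith [hθ.1]) hθ.2
    have h2 : 0 ≤ Real.cos θ := by
      rw [← Real.cos_sub_two_pi]
      exact cos_nonneg_of_mem_Icc ⟨by linarith [hθ.1], by linarith [hθ.2]⟩
    rw [abs_of_nonpos (by nlinarith)]; ring
  · intro θ hθ
    rw [Set.uIcc_of_le (by linarith)] at hθ
    have h1 : Real.sin θ ≤ 0 := hsle θ hθ.1 (by linarith [hθ.2])
    have h2 : Real.cos θ ≤ 0 := cos_nonpos_of_pi_div_two_le_of_le (by linarith [hθ.1])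
      (by linarith [hθ.2])
    rw [abs_of_nonneg (by nlinarith)]; ring
  · intro θ hθ
    rw [Set.uIcc_of_le (by linarith)] at hθ
    have h1 : 0 ≤ Real.sin θ := sin_nonneg_of_nonneg_of_le_pi (by linarith [hθ.1]) hθ.2
    have h2 : Real.cos θ ≤ 0 := cos_nonpos_of_pi_div_two_le_of_le hθ.1 (by linarith [hθ.2])
    rw [abs_of_nonpos (by nlinarith)]; ring
  · intro θ hθ
    rw [Set.uIcc_of_le (by linarith)] at hθ
    have h1 : 0 ≤ Real.sin θ := sin_nonneg_of_nonneg_of_le_pi hθ.1 (by linarith [hθ.2])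
    have h2 : 0 ≤ Real.cos θ := cos_nonneg_of_mem_Icc ⟨by linarith [hθ.1], hθ.2⟩
    rw [abs_of_nonneg (by nlinarith)]; ring

lemma integral_abs_cos : ∫ θ in (0:ℝ)..(2*π), |Real.cos θ| = 4 := by
  have hpi := pi_pos
  have hi : ∀ a b : ℝ, IntervalIntegrable (fun θ : ℝ => |Real.cos θ|)
      MeasureTheory.volume a b := fun a b => continuous_cos.abs.intervalIntegrable a b
  rw [← intervalIntegral.integral_add_adjacent_intervals (b := 3*π/2) (hi 0 (3*π/2))
      (hi (3*π/2) (2*π)),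
    ← intervalIntegral.integral_add_adjacent_intervals (b := π/2) (hi 0 (π/2)) (hi (π/2) (3*π/2))]
  have h32 : Real.sin (3*π/2) = -1 := by
    rw [show (3*π/2 : ℝ) = π + π/2 by ring, Real.sin_add]; simp
  have e1 : ∫ θ in (0:ℝ)..(π/2), |Real.cos θ| = 1 := by
    rw [intervalIntegral.integral_congr (g := fun θ => Real.cos θ) ?_, integral_cos]
    · simp
    · intro θ hθ
      rw [Set.uIcc_of_le (by linarith)] at hθ
      exact abs_of_nonneg (cos_nonneg_of_mem_Icc ⟨by linarith [hθ.1], hθ.2⟩)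
  have e2 : ∫ θ in (π/2:ℝ)..(3*π/2), |Real.cos θ| = 2 := by
    rw [intervalIntegral.integral_congr (g := fun θ => -Real.cos θ) ?_,
      intervalIntegral.integral_neg, integral_cos]
    · rw [h32]; simp; norm_num
    · intro θ hθ
      rw [Set.uIcc_of_le (by linarith)] at hθ
      exact abs_of_nonpos (cos_nonpos_of_pi_div_two_le_of_le hθ.1 (by linarith [hθ.2]))
  have e3 : ∫ θ in (3*π/2:ℝ)..(2*π), |Real.cos θ| = 1 := by
    rw [intervalIntegral.integral_congr (g := fun θ => Real.cos θ) ?_, integral_cos]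
    · rw [Real.sin_two_pi, h32]; norm_num
    · intro θ hθ
      rw [Set.uIcc_of_le (by linarith)] at hθ
      refine abs_of_nonneg ?_
      rw [← Real.cos_sub_two_pi]
      exact cos_nonneg_of_mem_Icc ⟨by linarith [hθ.1], by linarith [hθ.2]⟩
  rw [e1, e2, e3]; norm_num

lemma integral_abs_sin : ∫ θ in (0:ℝ)..(2*π), |Real.sin θ| = 4 := by
  have hpi := pi_pos
  have hi : ∀ a b : ℝ, IntervalIntegrable (fun θ : ℝ => |Real.sin θ|)
      MeasureTheory.volume a b := fun a b => continuous_sin.abs.intervalIntegrable a b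
  rw [← intervalIntegral.integral_add_adjacent_intervals (b := π) (hi 0 π) (hi π (2*π))]
  have e1 : ∫ θ in (0:ℝ)..π, |Real.sin θ| = 2 := by
    rw [intervalIntegral.integral_congr (g := fun θ => Real.sin θ) ?_, integral_sin]
    · norm_num
    · intro θ hθ
      rw [Set.uIcc_of_le (by linarith)] at hθ
      exact abs_of_nonneg (sin_nonneg_of_nonneg_of_le_pi hθ.1 hθ.2)
  have e2 : ∫ θ in (π:ℝ)..(2*π), |Real.sin θ| = 2 := by
    rw [intervalIntegral.integral_congr (g := fun θ => -Real.sin θ) ?_,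
      intervalIntegral.integral_neg, integral_sin]
    · norm_num
    · intro θ hθ
      rw [Set.uIcc_of_le (by linarith)] at hθ
      refine abs_of_nonpos ?_
      have := sin_nonneg_of_nonneg_of_le_pi (x := θ - π) (by linarith [hθ.1]) (by linarith [hθ.2])
      rw [Real.sin_sub_pi] at this; linarith
  rw [e1, e2]; norm_num

/-- The mean square width of a cube with unit edge length is `1 + 4/π`. -/
theorem mean_square_width_cube :
    (3/4) * (1 / (4 * π)) *
      ∫ θ in (0:ℝ)..(2 * π), ∫ φ in (0:ℝ)..π,
        gCube (Real.cos θ * Real.sin φ) (Real.sin θ * Real.sin φ) (Real.cos φ) * Real.sin φ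
      = 1 + 4 / π := by
  simp only [inner_integral]
  have hi1 : IntervalIntegrable (fun θ : ℝ => (8:ℝ)/3) MeasureTheory.volume 0 (2*π) :=
    intervalIntegrable_const
  have hi2 : IntervalIntegrable (fun θ : ℝ => 32/9 * |Real.cos θ * Real.sin θ|)
      MeasureTheory.volume 0 (2*π) :=
    (continuous_const.mul (continuous_cos.mul continuous_sin).abs).intervalIntegrable _ _
  have hi3 : IntervalIntegrable (fun θ : ℝ => 16/9 * (|Real.cos θ| + |Real.sin θ|))
      MeasureTheory.volume 0 (2*π) :=
    (continuous_const.mul (continuous_cos.abs.add continuous_sin.abs)).intervalIntegrable _ _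
  rw [intervalIntegral.integral_add (hi1.add hi2) hi3, intervalIntegral.integral_add hi1 hi2,
    intervalIntegral.integral_const, intervalIntegral.integral_const_mul,
    intervalIntegral.integral_const_mul, integral_abs_cos_mul_sin,
    intervalIntegral.integral_add (continuous_cos.abs.intervalIntegrable _ _)
      (continuous_sin.abs.intervalIntegrable _ _),
    integral_abs_cos, integral_abs_sin]
  have hπ : (π : ℝ) ≠ 0 := pi_ne_zero
  field_simp
  ring
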